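/- Let S be an (m+1)×(m+1) symmetric unitary complex matrix with S_{j0} ≠ 0 for all j, and define J_r(j; i_1,…,i_r) = (Π_{k=1}^r S_{i_k j}) / S_{j0}^{r-1} for r ≥ 1. Then with N_{ab}^c = Σ_l S_{al} S_{bl} conj(S_{lc}) / S_{0l}, for all r ≥ 2 and all indices: Σ_{k=0}^m N_{i_{r-1} i_r}^k · J_{r-1}(j; i_1,…,i_{r-2}, k) = J_r(j; i_1,…,i_r). -/

import Mathlib

open Matrix Finset

theorem stmt_16 (m : ℕ) (S : Matrix (Fin (m + 1)) (Fin (m + 1)) ℂ)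
    (hsymm : Sᵀ = S) (hunit : S * Sᴴ = 1) (hne : ∀ j, S j 0 ≠ 0)
    (N : Fin (m + 1) → Fin (m + 1) → Fin (m + 1) → ℂ)
    (hN : ∀ a b c, N a b c = ∑ l, S a l * S b l * (starRingEnd ℂ) (S l c) / S 0 l)
    (J : (r : ℕ) → Fin (m + 1) → (Fin r → Fin (m + 1)) → ℂ)
    (hJ : ∀ (r : ℕ) (j : Fin (m + 1)) (i : Fin r → Fin (m + 1)),
      J r j i = (∏ t, S (i t) j) / (S j 0) ^ (r - 1)) :
    ∀ (n : ℕ) (i : Fin n → Fin (m + 1)) (a b j : Fin (m + 1)),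
      ∑ k, N a b k * J (n + 1) j (Fin.snoc i k)
        = J (n + 2) j (Fin.snoc (Fin.snoc i a) b) := by
  intro n i a b j
  have hsym : ∀ p q, S p q = S q p := by
    intro p q
    conv_rhs => rw [← hsymm]
    rfl
  have horth : ∀ l, ∑ k, (starRingEnd ℂ) (S l k) * S k j = if j = l then 1 else 0 := by
    intro l
    have h := congrFun (congrFun hunit j) l
    simp only [Matrix.mul_apply, Matrix.conjTranspose_apply, Matrix.one_apply] at h
    rw [← h]
    refine Finset.sum_congr rfl fun k _ => ?_
    rw [hsym k j, RCLike.star_def]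
    ring
  have hkey : ∑ k, N a b k * S k j = S a j * S b j / S 0 j := by
    calc ∑ k, N a b k * S k j
        = ∑ l, (S a l * S b l / S 0 l) * ∑ k, (starRingEnd ℂ) (S l k) * S k j := by
          simp only [hN, Finset.sum_mul]
          rw [Finset.sum_comm]
          refine Finset.sum_congr rfl fun l _ => ?_
          rw [Finset.mul_sum]
          refine Finset.sum_congr rfl fun k _ => ?_
          ring
      _ = S a j * S b j / S 0 j := by
          simp only [horth]
          rw [Finset.sum_eq_single j]
          · simp
          · intro l _ hl
            rw [if_neg (fun h => hl h.symm), mul_zero]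
          · intro h; exact absurd (Finset.mem_univ j) h
  simp only [hJ, Fin.prod_univ_castSucc, Fin.snoc_castSucc, Fin.snoc_last,
    Nat.add_sub_cancel]
  have h1 : ∑ k, N a b k * ((∏ t, S (i t) j) * S k j / S j 0 ^ n)
      = (∏ t, S (i t) j) / S j 0 ^ n * (S a j * S b j / S 0 j) := by
    rw [← hkey, Finset.mul_sum]
    refine Finset.sum_congr rfl fun k _ => ?_
    ring
  rw [h1, hsym 0 j]
  field_simp
  rw [show n + 2 - 1 = n + 1 by omega]
  ring
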